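/- In a locally finite partially ordered set (causal set), if an event x has a non-empty rank 2 past (i.e., there exists y ≺ x whose minimal path to x has exactly 2 links), then there exists an event y in the rank 2 past of x such that the interval [y, x] is pure, meaning every element z with y ≺ z ≺ x satisfies both y ⋖ z and z ⋖ x (where ⋖ denotes the covering/link relation). -/

import Mathlib

/-- `IsPath x y l`: the list `l` is a path from `x` to `y`, i.e. a chain of
consecutive links (covering relations) starting at `x` and ending at `y`. -/
def IsPath {C : Type*} [PartialOrder C] (x y : C) (l : List C) : Prop :=
  l.Chain' (· ⋖ ·) ∧ l.head? = some x ∧ l.getLast? = some y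

/-- `rank y x` is the minimal number of links over all paths from `y` to `x`. -/
noncomputable def rank {C : Type*} [PartialOrder C] (y x : C) : ℕ :=
  sInf {n | ∃ l : List C, IsPath y x l ∧ l.length = n + 1}

lemma rank_eq_two_of {C : Type*} [PartialOrder C] {y x z : C}
    (hne : y ≠ x) (hnc : ¬ y ⋖ x) (h1 : y ⋖ z) (h2 : z ⋖ x) : rank y x = 2 := by
  have hmem : 2 ∈ {n | ∃ l : List C, IsPath y x l ∧ l.length = n + 1} := by
    refine ⟨[y, z, x], ⟨?_, by simp, by simp⟩, by simp⟩
    simp [List.Chain', List.isChain_cons_cons, h1, h2]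
  have h0 : 0 ∉ {n | ∃ l : List C, IsPath y x l ∧ l.length = n + 1} := by
    rintro ⟨l, ⟨hc, hh, hl⟩, hlen⟩
    rcases l with _ | ⟨a, _ | ⟨b, t⟩⟩ <;> simp_all [IsPath]
  have h1' : 1 ∉ {n | ∃ l : List C, IsPath y x l ∧ l.length = n + 1} := by
    rintro ⟨l, ⟨hc, hh, hl⟩, hlen⟩
    rcases l with _ | ⟨a, _ | ⟨b, _ | t⟩⟩ <;> simp_all [IsPath, List.Chain', List.isChain_cons_cons]
  unfold rank
  refine le_antisymm (Nat.sInf_le hmem) ?_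
  by_contra hlt
  push_neg at hlt
  have hm := Nat.sInf_mem (⟨2, hmem⟩ : Set.Nonempty _)
  interval_cases h : sInf {n | ∃ l : List C, IsPath y x l ∧ l.length = n + 1}
  · exact h0 hm
  · exact h1' hm

lemma exists_rank_two_above {C : Type*} [PartialOrder C] [LocallyFiniteOrder C] {z x : C}
    (hzx : z < x) (hnc : ¬ z ⋖ x) : ∃ w, z ≤ w ∧ w < x ∧ rank w x = 2 := by
  classical
  set T := (Finset.Ico z x).filter (fun w => ¬ w ⋖ x) with hT
  have hzT : z ∈ T := by simp [hT, Finset.mem_Ico, hzx, hnc]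
  obtain ⟨w, hwT, hwmax⟩ := Finset.exists_maximal ⟨z, hzT⟩
  simp only [hT, Finset.mem_filter, Finset.mem_Ico] at hwT
  obtain ⟨⟨hzw, hwx⟩, hwnc⟩ := hwT
  obtain ⟨c, hwc, hcx⟩ := (not_covBy_iff hwx).mp hwnc
  have hIoo : (Finset.Ioo w x).Nonempty := ⟨c, by simp [Finset.mem_Ioo, hwc, hcx]⟩
  obtain ⟨u, huIoo, humin⟩ := Finset.exists_minimal hIoo
  simp only [Finset.mem_Ioo] at huIoo
  have hwu : w ⋖ u := by
    refine ⟨huIoo.1, fun d hwd hdu => ?_⟩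
    exact (humin (by simp [Finset.mem_Ioo, hwd, hdu.trans huIoo.2]) hdu.le).not_gt hdu
  have hux : u ⋖ x := by
    by_contra hunc
    have huT : u ∈ T := by
      simp only [hT, Finset.mem_filter, Finset.mem_Ico]
      exact ⟨⟨hzw.trans huIoo.1.le, huIoo.2⟩, hunc⟩
    exact (hwmax huT huIoo.1.le).not_gt huIoo.1
  exact ⟨w, hzw, hwx, rank_eq_two_of hwx.ne hwnc hwu hux⟩

theorem stmt0 {C : Type*} [PartialOrder C] [LocallyFiniteOrder C] (x : C)
    (h : ∃ y, y < x ∧ rank y x = 2) :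
    ∃ y, y < x ∧ rank y x = 2 ∧ ∀ z, y < z → z < x → y ⋖ z ∧ z ⋖ x := by
  classical
  obtain ⟨y0, hy0⟩ := h
  set Ncards := {n | ∃ y : C, (y < x ∧ rank y x = 2) ∧ (Finset.Icc y x).card = n}
    with hNcards
  have hne : Ncards.Nonempty := ⟨_, y0, hy0, rfl⟩
  obtain ⟨y, hyS, hycard⟩ := Nat.sInf_mem hne
  refine ⟨y, hyS.1, hyS.2, fun z hyz hzx => ?_⟩
  have key : ∀ v, y < v → v < x → ¬ v ⋖ x → False := by
    intro v hyv hvx hnc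
    obtain ⟨w, hvw, hwx, hrw⟩ := exists_rank_two_above hvx hnc
    have hsub : Finset.Icc w x ⊂ Finset.Icc y x := by
      refine ⟨Finset.Icc_subset_Icc_left ((hyv.trans_le hvw).le), ?_⟩
      intro hsub'
      have hy : y ∈ Finset.Icc w x := hsub' (by simp [Finset.mem_Icc, le_refl,
        (hyz.trans hzx).le, (hyv.trans hvx).le])
      simp only [Finset.mem_Icc] at hy
      exact (hyv.trans_le hvw).not_ge hy.1
    have hlt := Finset.card_lt_card hsub
    have hle : sInf Ncards ≤ (Finset.Icc w x).card :=
      Nat.sInf_le ⟨w, ⟨hwx, hrw⟩, rfl⟩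
    omega
  have hzc : z ⋖ x := by
    by_contra hnc
    exact key z hyz hzx hnc
  refine ⟨?_, hzc⟩
  by_contra hnc
  obtain ⟨v, hyv, hvz⟩ := (not_covBy_iff hyz).mp hnc
  exact key v hyv (hvz.trans hzx) (fun hc => hc.2 hvz hzx)
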